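/- (Efron(q) weights.) Let n ≥ 1, q ≥ 1, let (N_1,…,N_n) be a multinomial random vector with q trials and uniform cell probabilities 1/n (equivalently N_i = card{k ≤ q : U_k = i} for U_1,…,U_q i.i.d. uniform on {1,…,n}), and set W_i := (n/q)·N_i. Then for any subset Λ ⊆ {1,…,n} with card(Λ) = m ≥ 1, any i ∈ Λ, and W̄ := m^{−1} Σ_{j∈Λ} W_j, one has E[(W_i − W̄)²/W̄ | W̄ > 0] = (n/q)(1 − 1/m). -/

import Mathlib

open MeasureTheory ProbabilityTheory Finset

noncomputable def unifM (α : Type*) [Fintype α] [MeasurableSpace α] : Measure α :=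
  (Fintype.card α : ENNReal)⁻¹ • Measure.count

noncomputable def efronW (n q : ℕ) (i : Fin n) (u : Fin q → Fin n) : ℝ :=
  (n : ℝ) / q * ((Finset.univ.filter fun k => u k = i).card : ℝ)

section aux

variable {n q : ℕ} (Λ : Finset (Fin n))

/-- number of draws equal to `i` -/
def Ncnt (i : Fin n) (u : Fin q → Fin n) : ℕ := (Finset.univ.filter fun k => u k = i).card

/-- number of draws landing in `Λ` -/
def Mcnt (u : Fin q → Fin n) : ℕ := (Finset.univ.filter fun k => u k ∈ Λ).card

lemma sum_Ncnt (u : Fin q → Fin n) : ∑ j ∈ Λ, Ncnt j u = Mcnt Λ u := by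
  simp only [Ncnt, Mcnt, Finset.card_filter]
  rw [Finset.sum_comm]
  refine Finset.sum_congr rfl fun k _ => ?_
  simp [eq_comm]

end aux

section fiber

variable {n q : ℕ} (Λ : Finset (Fin n))

/-- the "pattern" of a draw: which coordinates land in `Λ`, and the values of those outside. -/
def pat (u : Fin q → Fin n) : Fin q → Option (Fin n) :=
  fun k => if u k ∈ Λ then none else some (u k)

/-- the finsets parametrizing a fiber of `pat` -/
def fibS (p : Fin q → Option (Fin n)) : Fin q → Finset (Fin n) :=
  fun k => (p k).elim Λ (fun j => {j})

lemma fiber_eq (p : Fin q → Option (Fin n)) (hp : ∀ k j, p k = some j → j ∉ Λ) :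
    (Finset.univ.filter fun u : Fin q → Fin n => pat Λ u = p) = Fintype.piFinset (fibS Λ p) := by
  ext u
  simp only [Finset.mem_filter, Finset.mem_univ, true_and, Fintype.mem_piFinset, funext_iff, pat,
    fibS]
  refine forall_congr' fun k => ?_
  cases hpk : p k with
  | none => by_cases h : u k ∈ Λ <;> simp [h]
  | some j =>
    have hj := hp k j hpk
    by_cases h : u k ∈ Λ
    · simp only [if_pos h, Option.elim, Finset.mem_singleton]
      constructor
      · rintro h'; exact absurd h' (by simp)
      · rintro rfl; exact absurd h hj
    · simp only [if_neg h, Option.elim, Option.some.injEq, Finset.mem_singleton]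

lemma fiber_empty (p : Fin q → Option (Fin n)) (k : Fin q) (j : Fin n) (hk : p k = some j)
    (hj : j ∈ Λ) :
    (Finset.univ.filter fun u : Fin q → Fin n => pat Λ u = p) = ∅ := by
  rw [Finset.filter_eq_empty_iff]
  intro u _ h
  have := congrFun h k
  simp only [pat, hk] at this
  by_cases hu : u k ∈ Λ <;> simp [hu] at this
  exact hu (this ▸ hj)

end fiber

section count

variable {n q : ℕ} (Λ : Finset (Fin n)) (p : Fin q → Option (Fin n))

lemma prod_fibS_card (s : Finset (Fin q)) (hp : ∀ k j, p k = some j → j ∉ Λ) :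
    ∏ k ∈ s, (fibS Λ p k).card = Λ.card ^ (s.filter fun k => p k = none).card := by
  rw [← Finset.prod_filter_mul_prod_filter_not s (fun k => p k = none)]
  have h1 : ∀ k ∈ s.filter (fun k => p k = none), (fibS Λ p k).card = Λ.card := by
    intro k hk
    rw [Finset.mem_filter] at hk
    simp [fibS, hk.2]
  have h2 : ∀ k ∈ s.filter (fun k => ¬ p k = none), (fibS Λ p k).card = 1 := by
    intro k hk
    rw [Finset.mem_filter] at hk
    rcases Option.ne_none_iff_exists'.mp hk.2 with ⟨j, hj⟩
    simp [fibS, hj]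
  rw [Finset.prod_congr rfl h1, Finset.prod_congr rfl h2, Finset.prod_const, Finset.prod_const,
    one_pow, mul_one]

lemma card_fiber (hp : ∀ k j, p k = some j → j ∉ Λ) :
    (Fintype.piFinset (fibS Λ p)).card
      = Λ.card ^ (Finset.univ.filter fun k => p k = none).card := by
  rw [Fintype.card_piFinset, prod_fibS_card Λ p Finset.univ hp]

lemma Mcnt_fiber (hp : ∀ k j, p k = some j → j ∉ Λ) (u : Fin q → Fin n)
    (hu : u ∈ Fintype.piFinset (fibS Λ p)) :
    Mcnt Λ u = (Finset.univ.filter fun k => p k = none).card := by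
  rw [Fintype.mem_piFinset] at hu
  unfold Mcnt
  congr 1
  apply Finset.filter_congr
  intro k _
  have := hu k
  cases hpk : p k with
  | none => simp only [hpk, fibS, Option.elim] at this; simp [this, hpk]
  | some j =>
    simp only [hpk, fibS, Option.elim, Finset.mem_singleton] at this
    simp [this, hpk, hp k j hpk]

lemma count1 (i : Fin n) (hi : i ∈ Λ) (hp : ∀ k j, p k = some j → j ∉ Λ) (k : Fin q) :
    ((Fintype.piFinset (fibS Λ p)).filter fun u => u k = i).card
      = if p k = none
        then Λ.card ^ ((Finset.univ.filter fun k => p k = none).card - 1) else 0 := by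
  rw [show (Finset.filter (fun u => u k = i) (Fintype.piFinset (fibS Λ p))).card
      = if i ∈ fibS Λ p k then ∏ b ∈ Finset.univ.erase k, (fibS Λ p b).card else 0 from
    Fintype.card_filter_piFinset_eq (fibS Λ p) k i]
  cases hpk : p k with
  | none =>
    have hik : i ∈ fibS Λ p k := by simp [fibS, hpk, hi]
    rw [if_pos hik, if_pos rfl, prod_fibS_card Λ p _ hp, Finset.filter_erase,
      Finset.card_erase_of_mem]
    simp [hpk]
  | some j =>
    have hik : i ∉ fibS Λ p k := by
      simp only [fibS, hpk, Option.elim, Finset.mem_singleton]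
      rintro rfl; exact hp k i hpk hi
    rw [if_neg hik, if_neg (by simp [hpk])]

end count

section count2

variable {n q : ℕ} (Λ : Finset (Fin n)) (p : Fin q → Option (Fin n))

lemma count2 (i : Fin n) (hi : i ∈ Λ) (hp : ∀ k j, p k = some j → j ∉ Λ) (k l : Fin q)
    (hkl : k ≠ l) :
    ((Fintype.piFinset (fibS Λ p)).filter fun u => u k = i ∧ u l = i).card
      = if p k = none ∧ p l = none
        then Λ.card ^ ((Finset.univ.filter fun k => p k = none).card - 2) else 0 := by
  have hsplit : (Fintype.piFinset (fibS Λ p)).filter (fun u => u k = i ∧ u l = i)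
      = ((Fintype.piFinset (fibS Λ p)).filter (fun u => u l = i)).filter (fun u => u k = i) := by
    rw [Finset.filter_filter]
    apply Finset.filter_congr; intro u _; tauto
  rw [hsplit]
  cases hpl : p l with
  | some j =>
    have hil : i ∉ fibS Λ p l := by
      simp only [fibS, hpl, Option.elim, Finset.mem_singleton]
      rintro rfl; exact hp l i hpl hi
    rw [Fintype.filter_piFinset_of_notMem _ _ _ hil]
    simp [hpl]
  | none =>
    have hil : i ∈ fibS Λ p l := by simp [fibS, hpl, hi]
    rw [← Fintype.piFinset_update_singleton_eq_filter_piFinset_eq _ _ hil]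
    rw [show (Finset.filter (fun u => u k = i)
          (Fintype.piFinset (Function.update (fibS Λ p) l {i}))).card
        = if i ∈ Function.update (fibS Λ p) l {i} k
          then ∏ b ∈ Finset.univ.erase k, (Function.update (fibS Λ p) l {i} b).card else 0 from
      Fintype.card_filter_piFinset_eq (Function.update (fibS Λ p) l {i}) k i]
    have hupk : Function.update (fibS Λ p) l {i} k = fibS Λ p k := Function.update_of_ne hkl _ _
    cases hpk : p k with
    | some j =>
      have hik : i ∉ Function.update (fibS Λ p) l {i} k := by
        rw [hupk]
        simp only [fibS, hpk, Option.elim, Finset.mem_singleton]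
        rintro rfl; exact hp k i hpk hi
      rw [if_neg hik]
      simp [hpk]
    | none =>
      have hik : i ∈ Function.update (fibS Λ p) l {i} k := by
        rw [hupk]; simp [fibS, hpk, hi]
      rw [if_pos hik, if_pos ⟨rfl, rfl⟩]
      have hlk : l ∈ Finset.univ.erase k := by
        simp [Finset.mem_erase, Ne.symm hkl]
      rw [← Finset.mul_prod_erase _ _ hlk]
      have hrest : ∀ b ∈ (Finset.univ.erase k).erase l,
          (Function.update (fibS Λ p) l {i} b).card = (fibS Λ p b).card := by
        intro b hb
        rw [Function.update_of_ne (Finset.mem_erase.mp hb).1]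
      rw [Finset.prod_congr rfl hrest, Function.update_self, Finset.card_singleton, one_mul,
        prod_fibS_card Λ p _ hp, Finset.filter_erase, Finset.filter_erase,
        Finset.card_erase_of_mem, Finset.card_erase_of_mem]
      · rfl
      · simp [hpk]
      · simp [Finset.mem_erase, Ne.symm hkl, hpl]

end count2

section sums

variable {n q : ℕ} (Λ : Finset (Fin n)) (p : Fin q → Option (Fin n)) (i : Fin n)

lemma sumN_fiber (hi : i ∈ Λ) (hp : ∀ k j, p k = some j → j ∉ Λ) :
    ∑ u ∈ Fintype.piFinset (fibS Λ p), Ncnt i u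
      = (Finset.univ.filter fun k => p k = none).card
        * Λ.card ^ ((Finset.univ.filter fun k => p k = none).card - 1) := by
  have : ∀ u : Fin q → Fin n, Ncnt i u = ∑ k : Fin q, if u k = i then 1 else 0 := by
    intro u; rw [Ncnt, Finset.card_filter]
  simp only [this]
  rw [Finset.sum_comm]
  have hcnt : ∀ k : Fin q, (∑ u ∈ Fintype.piFinset (fibS Λ p), if u k = i then 1 else 0)
      = ((Fintype.piFinset (fibS Λ p)).filter fun u => u k = i).card := by
    intro k; rw [Finset.card_filter]
  simp only [hcnt, count1 Λ p i hi hp]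
  rw [← Finset.sum_filter]
  simp [Finset.sum_const, mul_comm]

lemma sumN2_fiber (hi : i ∈ Λ) (hp : ∀ k j, p k = some j → j ∉ Λ) :
    ∑ u ∈ Fintype.piFinset (fibS Λ p), (Ncnt i u) ^ 2
      = (Finset.univ.filter fun k => p k = none).card
          * Λ.card ^ ((Finset.univ.filter fun k => p k = none).card - 1)
        + (Finset.univ.filter fun k => p k = none).card
          * ((Finset.univ.filter fun k => p k = none).card - 1)
          * Λ.card ^ ((Finset.univ.filter fun k => p k = none).card - 2) := by
  set K := Finset.univ.filter fun k : Fin q => p k = none with hK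
  have hN : ∀ u : Fin q → Fin n, (Ncnt i u) ^ 2
      = ∑ k : Fin q, ∑ l : Fin q, if u k = i ∧ u l = i then 1 else 0 := by
    intro u
    rw [sq, Ncnt, Finset.card_filter, Finset.sum_mul_sum]
    refine Finset.sum_congr rfl fun k _ => Finset.sum_congr rfl fun l _ => ?_
    by_cases h1 : u k = i <;> by_cases h2 : u l = i <;> simp [h1, h2]
  simp only [hN]
  rw [Finset.sum_comm]
  have step1 : ∀ k : Fin q,
      (∑ u ∈ Fintype.piFinset (fibS Λ p), ∑ l : Fin q, if u k = i ∧ u l = i then 1 else 0)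
      = ∑ l : Fin q, ((Fintype.piFinset (fibS Λ p)).filter fun u => u k = i ∧ u l = i).card := by
    intro k
    rw [Finset.sum_comm]
    exact Finset.sum_congr rfl fun l _ => (Finset.card_filter _ _).symm
  simp only [step1]
  have step2 : ∀ k : Fin q,
      (∑ l : Fin q, ((Fintype.piFinset (fibS Λ p)).filter fun u => u k = i ∧ u l = i).card)
      = (if p k = none then Λ.card ^ (K.card - 1) else 0)
        + ∑ l ∈ Finset.univ.erase k,
            (if p k = none ∧ p l = none then Λ.card ^ (K.card - 2) else 0) := by
    intro k
    rw [← Finset.add_sum_erase _ _ (Finset.mem_univ k)]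
    congr 1
    · have : ((Fintype.piFinset (fibS Λ p)).filter fun u => u k = i ∧ u k = i).card
          = ((Fintype.piFinset (fibS Λ p)).filter fun u => u k = i).card := by
        congr 1; apply Finset.filter_congr; intro u _; simp
      rw [this, count1 Λ p i hi hp]
    · exact Finset.sum_congr rfl fun l hl =>
        count2 Λ p i hi hp k l (Ne.symm (Finset.mem_erase.mp hl).1)
  simp only [step2]
  rw [Finset.sum_add_distrib]
  congr 1
  · rw [← Finset.sum_filter]; simp [hK, Finset.sum_const, mul_comm]
  · have inner : ∀ k : Fin q,
        (∑ l ∈ Finset.univ.erase k, if p k = none ∧ p l = none then Λ.card ^ (K.card - 2) else 0)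
        = if p k = none then (K.card - 1) * Λ.card ^ (K.card - 2) else 0 := by
      intro k
      by_cases hpk : p k = none
      · rw [if_pos hpk]
        simp only [hpk, true_and]
        rw [← Finset.sum_filter, Finset.sum_const, smul_eq_mul]
        congr 2
        rw [Finset.filter_erase, Finset.card_erase_of_mem]
        simp [hK, hpk]
      · rw [if_neg hpk]
        simp [hpk]
    simp only [inner]
    rw [← Finset.sum_filter, Finset.sum_const, smul_eq_mul, ← hK, ← mul_assoc]

end sums

lemma scalarid (m t : ℕ) (hm : 1 ≤ m) (ht : 1 ≤ t) :
    ((t:ℝ) * m^(t-1) + t * ((t:ℝ)-1) * m^(t-2)) * ((m:ℝ)/t)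
      - (t * (m:ℝ)^(t-1)) * (2 * ((t:ℝ)/m) * m / t)
      + ((m:ℝ)^t) * (((t:ℝ)/m)^2 * (m/t))
    = (1 - 1/(m:ℝ)) * (m:ℝ)^t := by
  have hm0 : (m:ℝ) ≠ 0 := by positivity
  have ht0 : (t:ℝ) ≠ 0 := by positivity
  have hA : (m:ℝ) ^ t = m * (m:ℝ) ^ (t - 1) := by
    conv_lhs => rw [show t = (t-1)+1 by omega]
    rw [pow_succ]; ring
  have hB : ((t:ℝ) - 1) * (m:ℝ) ^ (t-2) * m = ((t:ℝ) - 1) * (m:ℝ) ^ (t-1) := by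
    rcases Nat.lt_or_ge t 2 with h2 | h2
    · have h1 : t = 1 := by omega
      subst h1; norm_num
    · have h3 : t - 2 + 1 = t - 1 := by omega
      rw [mul_assoc, ← pow_succ, h3]
  have expand : ((t:ℝ) * m^(t-1) + t * ((t:ℝ)-1) * m^(t-2)) * ((m:ℝ)/t)
      - (t * (m:ℝ)^(t-1)) * (2 * ((t:ℝ)/m) * m / t)
      + ((m:ℝ)^t) * (((t:ℝ)/m)^2 * (m/t))
      = (m:ℝ) * m^(t-1) + (((t:ℝ)-1) * m^(t-2) * m) - t * m^(t-1) := by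
    rw [hA]; field_simp; ring
  rw [expand, hB, hA]
  field_simp; ring

section fiberreal

variable {n q : ℕ} (Λ : Finset (Fin n)) (p : Fin q → Option (Fin n)) (i : Fin n)

lemma fiber_real (hm1 : 1 ≤ Λ.card) (hi : i ∈ Λ) (hp : ∀ k j, p k = some j → j ∉ Λ)
    (ht : 1 ≤ (Finset.univ.filter fun k => p k = none).card) :
    ∑ u ∈ Fintype.piFinset (fibS Λ p),
        (((Ncnt i u : ℝ)) - ((Finset.univ.filter fun k => p k = none).card : ℝ) / Λ.card) ^ 2
          * Λ.card / ((Finset.univ.filter fun k => p k = none).card : ℝ)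
      = (1 - 1 / (Λ.card : ℝ))
          * (Λ.card : ℝ) ^ (Finset.univ.filter fun k => p k = none).card := by
  have key : ∀ u ∈ Fintype.piFinset (fibS Λ p),
      (((Ncnt i u : ℝ)) - ((Finset.univ.filter fun k => p k = none).card : ℝ) / Λ.card) ^ 2
          * Λ.card / ((Finset.univ.filter fun k => p k = none).card : ℝ)
      = ((Ncnt i u : ℝ))^2
            * ((Λ.card : ℝ)/((Finset.univ.filter fun k => p k = none).card : ℝ))
        - ((Ncnt i u : ℝ))
            * (2 * (((Finset.univ.filter fun k => p k = none).card : ℝ)/(Λ.card:ℝ))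
                * (Λ.card:ℝ) / ((Finset.univ.filter fun k => p k = none).card : ℝ))
        + (((Finset.univ.filter fun k => p k = none).card : ℝ)/(Λ.card:ℝ))^2
            * ((Λ.card:ℝ)/((Finset.univ.filter fun k => p k = none).card : ℝ)) := by
    intro u _; ring
  rw [Finset.sum_congr rfl key, Finset.sum_add_distrib, Finset.sum_sub_distrib,
    ← Finset.sum_mul, ← Finset.sum_mul, Finset.sum_const, nsmul_eq_mul]
  have e0 : ((Fintype.piFinset (fibS Λ p)).card : ℝ)
      = (Λ.card : ℝ) ^ (Finset.univ.filter fun k => p k = none).card := by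
    rw [card_fiber Λ p hp]; push_cast; rfl
  have e1 : (∑ u ∈ Fintype.piFinset (fibS Λ p), ((Ncnt i u : ℝ)))
      = ((Finset.univ.filter fun k => p k = none).card : ℝ)
        * (Λ.card : ℝ) ^ ((Finset.univ.filter fun k => p k = none).card - 1) := by
    rw [← Nat.cast_sum, sumN_fiber Λ p i hi hp]; push_cast; rfl
  have e2 : (∑ u ∈ Fintype.piFinset (fibS Λ p), ((Ncnt i u : ℝ))^2)
      = ((Finset.univ.filter fun k => p k = none).card : ℝ)
          * (Λ.card : ℝ) ^ ((Finset.univ.filter fun k => p k = none).card - 1)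
        + ((Finset.univ.filter fun k => p k = none).card : ℝ)
          * (((Finset.univ.filter fun k => p k = none).card : ℝ) - 1)
          * (Λ.card : ℝ) ^ ((Finset.univ.filter fun k => p k = none).card - 2) := by
    have hcast : ((∑ u ∈ Fintype.piFinset (fibS Λ p), (Ncnt i u)^2 : ℕ) : ℝ)
        = ((Finset.univ.filter fun k => p k = none).card : ℝ)
          * (Λ.card : ℝ) ^ ((Finset.univ.filter fun k => p k = none).card - 1)
        + ((Finset.univ.filter fun k => p k = none).card : ℝ)
          * (((Finset.univ.filter fun k => p k = none).card : ℝ) - 1)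
          * (Λ.card : ℝ) ^ ((Finset.univ.filter fun k => p k = none).card - 2) := by
      rw [sumN2_fiber Λ p i hi hp]; push_cast [Nat.cast_sub ht]; ring
    rw [← hcast]; push_cast; rfl
  rw [e0, e1, e2]
  exact scalarid Λ.card _ hm1 ht

end fiberreal

section master

variable {n q : ℕ}

lemma master (Λ : Finset (Fin n)) (i : Fin n) (hm1 : 1 ≤ Λ.card) (hi : i ∈ Λ) :
    ∑ u : Fin q → Fin n,
        (if 0 < Mcnt Λ u
          then ((Ncnt i u : ℝ) - (Mcnt Λ u : ℝ) / Λ.card) ^ 2 * Λ.card / (Mcnt Λ u : ℝ)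
          else 0)
      = (1 - 1 / (Λ.card : ℝ))
          * ((Finset.univ.filter fun u : Fin q → Fin n => 0 < Mcnt Λ u).card : ℝ) := by
  classical
  have hrhs : ((Finset.univ.filter fun u : Fin q → Fin n => 0 < Mcnt Λ u).card : ℝ)
      = ∑ u : Fin q → Fin n, if 0 < Mcnt Λ u then (1:ℝ) else 0 :=
    Finset.natCast_card_filter _ _
  rw [hrhs, Finset.mul_sum, ← sub_eq_zero, ← Finset.sum_sub_distrib]
  set g : (Fin q → Fin n) → ℝ := fun u =>
    (if 0 < Mcnt Λ u
      then ((Ncnt i u : ℝ) - (Mcnt Λ u : ℝ) / Λ.card) ^ 2 * Λ.card / (Mcnt Λ u : ℝ)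
      else 0)
    - (1 - 1 / (Λ.card : ℝ)) * (if 0 < Mcnt Λ u then (1:ℝ) else 0) with hg
  show ∑ u : Fin q → Fin n, g u = 0
  rw [← Finset.sum_fiberwise Finset.univ (pat Λ) g]
  refine Finset.sum_eq_zero fun p _ => ?_
  by_cases hp : ∀ k j, p k = some j → j ∉ Λ
  · rw [fiber_eq Λ p hp]
    by_cases ht : 1 ≤ (Finset.univ.filter fun k => p k = none).card
    · have hMc : ∀ u ∈ Fintype.piFinset (fibS Λ p),
          Mcnt Λ u = (Finset.univ.filter fun k => p k = none).card :=
        fun u hu => Mcnt_fiber Λ p hp u hu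
      have hgu : ∀ u ∈ Fintype.piFinset (fibS Λ p), g u =
          ((Ncnt i u : ℝ) - ((Finset.univ.filter fun k => p k = none).card : ℝ) / Λ.card) ^ 2
              * Λ.card / ((Finset.univ.filter fun k => p k = none).card : ℝ)
            - (1 - 1 / (Λ.card : ℝ)) := by
        intro u hu
        rw [hg]
        simp only [hMc u hu, if_pos (by omega : 0 < (Finset.univ.filter
          fun k => p k = none).card), mul_one]
      rw [Finset.sum_congr rfl hgu, Finset.sum_sub_distrib, fiber_real Λ p i hm1 hi hp ht,
        Finset.sum_const, nsmul_eq_mul, card_fiber Λ p hp]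
      push_cast
      ring
    · have ht0 : (Finset.univ.filter fun k => p k = none).card = 0 := by omega
      refine Finset.sum_eq_zero fun u hu => ?_
      have hMc := Mcnt_fiber Λ p hp u hu
      rw [hg]
      simp [hMc, ht0]
  · push_neg at hp
    obtain ⟨k, j, hk, hj⟩ := hp
    rw [fiber_empty Λ p k j hk hj, Finset.sum_empty]

end master

/-- **`R_{2,W}` for Efron(q) weights**: for any cell `Λ` of cardinality `m ≥ 1` and `i ∈ Λ`,
with `W̄ = m⁻¹ Σ_{j∈Λ} W_j`, one has
`E[(W_i − W̄)²/W̄ | W̄ > 0] = (n/q)(1 − 1/m)`. -/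
theorem efron_R2 (n q : ℕ) (hn : 1 ≤ n) (hq : 1 ≤ q)
    (Λ : Finset (Fin n)) (m : ℕ) (hm : Λ.card = m) (hm1 : 1 ≤ m) (i : Fin n) (hi : i ∈ Λ) :
    ∫ u, (efronW n q i u - (∑ j ∈ Λ, efronW n q j u) / m) ^ 2 /
        ((∑ j ∈ Λ, efronW n q j u) / m)
      ∂((unifM (Fin q → Fin n))[|{u | 0 < (∑ j ∈ Λ, efronW n q j u) / m}]) =
      (n : ℝ) / q * (1 - 1 / m) := by
  classical
  subst hm
  have hn0 : (0:ℝ) < n := by exact_mod_cast hn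
  have hq0 : (0:ℝ) < q := by exact_mod_cast hq
  set c : ℝ := (n : ℝ) / q with hc
  have hc0 : 0 < c := by rw [hc]; positivity
  have hm0 : (0:ℝ) < (Λ.card : ℝ) := by exact_mod_cast hm1
  -- the sum of weights over the cell
  have hsum : ∀ u : Fin q → Fin n, (∑ j ∈ Λ, efronW n q j u) = c * (Mcnt Λ u : ℝ) := by
    intro u
    simp only [efronW, ← Finset.mul_sum, hc]
    congr 1
    exact_mod_cast congrArg (Nat.cast : ℕ → ℝ) (sum_Ncnt Λ u)
  -- pointwise form of the integrand
  set f : (Fin q → Fin n) → ℝ := fun u =>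
    (efronW n q i u - (∑ j ∈ Λ, efronW n q j u) / (Λ.card:ℝ)) ^ 2 /
      ((∑ j ∈ Λ, efronW n q j u) / (Λ.card:ℝ)) with hf
  have hfval : ∀ u : Fin q → Fin n, f u =
      c * (if 0 < Mcnt Λ u
        then ((Ncnt i u : ℝ) - (Mcnt Λ u : ℝ) / Λ.card) ^ 2 * Λ.card / (Mcnt Λ u : ℝ)
        else 0) := by
    intro u
    have hN : efronW n q i u = c * (Ncnt i u : ℝ) := by rw [efronW, hc]; rfl
    rw [hf]
    simp only [hsum u, hN]
    by_cases hM : 0 < Mcnt Λ u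
    · rw [if_pos hM]
      have hM0 : (0:ℝ) < (Mcnt Λ u : ℝ) := by exact_mod_cast hM
      field_simp
    · rw [if_neg hM]
      have hM0 : Mcnt Λ u = 0 := by omega
      have hN0 : Ncnt i u = 0 := by
        have hsub : (Finset.univ.filter fun k : Fin q => u k = i)
            ⊆ (Finset.univ.filter fun k : Fin q => u k ∈ Λ) := by
          intro k hk
          rw [Finset.mem_filter] at hk ⊢
          exact ⟨hk.1, hk.2 ▸ hi⟩
        have := Finset.card_le_card hsub
        unfold Ncnt
        unfold Mcnt at hM0
        omega
      simp [hM0, hN0]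
  -- the conditioning set as a finset
  set Afin : Finset (Fin q → Fin n) := Finset.univ.filter (fun u => 0 < Mcnt Λ u) with hAfin
  have hAset : {u : Fin q → Fin n | 0 < (∑ j ∈ Λ, efronW n q j u) / (Λ.card:ℝ)}
      = (↑Afin : Set (Fin q → Fin n)) := by
    ext u
    simp only [Set.mem_setOf_eq, hAfin, Finset.coe_filter, Finset.mem_univ, true_and, hsum]
    constructor
    · intro h
      by_contra hM
      have h0 : Mcnt Λ u = 0 := by omega
      rw [h0] at h; simp at h
    · intro h
      have h0 : (0:ℝ) < (Mcnt Λ u : ℝ) := by exact_mod_cast h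
      positivity
  have hAne : 0 < Afin.card := by
    refine Finset.card_pos.mpr ⟨fun _ => i, ?_⟩
    rw [hAfin, Finset.mem_filter]
    refine ⟨Finset.mem_univ _, ?_⟩
    unfold Mcnt
    rw [Finset.filter_true_of_mem (fun k _ => hi), Finset.card_univ, Fintype.card_fin]
    omega
  -- measure computations
  set μ : Measure (Fin q → Fin n) := unifM (Fin q → Fin n) with hμ
  have hcardpos : 0 < Fintype.card (Fin q → Fin n) :=
    @Fintype.card_pos _ _ ⟨fun _ => i⟩
  have hcard0 : (Fintype.card (Fin q → Fin n) : ENNReal) ≠ 0 := by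
    exact_mod_cast Nat.pos_iff_ne_zero.mp hcardpos
  have hcardtop : (Fintype.card (Fin q → Fin n) : ENNReal) ≠ ⊤ := ENNReal.natCast_ne_top _
  have hμfin : IsFiniteMeasure μ := by
    constructor
    rw [hμ, unifM]
    simp only [Measure.smul_apply, smul_eq_mul, Measure.count_univ]
    exact ENNReal.mul_lt_top (ENNReal.inv_lt_top.mpr (by positivity))
      (by simp [ENat.card_eq_coe_fintype_card])
  have hμA : μ ↑Afin = (Fintype.card (Fin q → Fin n) : ENNReal)⁻¹ * Afin.card := by
    rw [hμ, unifM, Measure.smul_apply, smul_eq_mul, Measure.count_apply_finset]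
  have hAcard0 : (Afin.card : ENNReal) ≠ 0 := by
    exact_mod_cast Nat.pos_iff_ne_zero.mp hAne
  have hμAne : μ ↑Afin ≠ 0 := by
    rw [hμA]
    exact mul_ne_zero (ENNReal.inv_ne_zero.mpr hcardtop) hAcard0
  haveI hν : IsProbabilityMeasure (μ[|(↑Afin : Set (Fin q → Fin n))]) :=
    cond_isProbabilityMeasure hμAne
  have hint : Integrable f (μ[|(↑Afin : Set (Fin q → Fin n))]) := .of_finite
  have hgoal : (∫ u, f u ∂(μ[|(↑Afin : Set (Fin q → Fin n))])) = c * (1 - 1/(Λ.card:ℝ)) := by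
    rw [integral_fintype]; simp only [Measure.real_def]
    have hw : ∀ x : Fin q → Fin n, ((μ[|(↑Afin : Set (Fin q → Fin n))]) {x}).toReal
        = if x ∈ Afin then (Afin.card : ℝ)⁻¹ else 0 := by
      intro x
      rw [cond_apply Afin.measurableSet]
      by_cases hx : x ∈ Afin
      · rw [if_pos hx]
        have hinter : ((↑Afin : Set (Fin q → Fin n)) ∩ {x}) = {x} := by
          ext y; simp only [Set.mem_inter_iff, Set.mem_singleton_iff, Finset.mem_coe,
            and_iff_right_iff_imp]
          rintro rfl; exact hx
        rw [hinter, hμA]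
        have hx1 : μ {x} = (Fintype.card (Fin q → Fin n) : ENNReal)⁻¹ := by
          rw [hμ, unifM, Measure.smul_apply, smul_eq_mul, Measure.count_singleton, mul_one]
        rw [hx1, ENNReal.toReal_mul, ENNReal.toReal_inv, ENNReal.toReal_mul,
          ENNReal.toReal_inv]
        simp only [ENNReal.toReal_natCast]
        rw [mul_inv, inv_inv]
        have hcR : (0:ℝ) < (Fintype.card (Fin q → Fin n) : ℝ) := by exact_mod_cast hcardpos
        field_simp
      · rw [if_neg hx]
        have hinter : ((↑Afin : Set (Fin q → Fin n)) ∩ {x}) = ∅ := by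
          ext y; simp only [Set.mem_inter_iff, Set.mem_singleton_iff, Finset.mem_coe,
            Set.mem_empty_iff_false, iff_false, not_and]
          rintro hy rfl; exact hx hy
        rw [hinter]
        simp
    simp only [hw, smul_eq_mul, ite_mul, zero_mul]
    rw [← Finset.sum_filter]
    have : ∀ x ∈ Finset.univ.filter (fun x => x ∈ Afin), (Afin.card : ℝ)⁻¹ * f x
        = (Afin.card : ℝ)⁻¹ * f x := fun _ _ => rfl
    rw [Finset.filter_mem_eq_inter, Finset.univ_inter, ← Finset.mul_sum]
    have hsumA : ∑ x ∈ Afin, f x = c * ((1 - 1/(Λ.card:ℝ)) * (Afin.card : ℝ)) := by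
      have hAeq : ∑ x ∈ Afin, f x = ∑ x : Fin q → Fin n,
          (if 0 < Mcnt Λ x then f x else 0) := by
        rw [hAfin, Finset.sum_filter]
      rw [hAeq]
      have : ∀ x : Fin q → Fin n, (if 0 < Mcnt Λ x then f x else 0)
          = c * (if 0 < Mcnt Λ x
            then ((Ncnt i x : ℝ) - (Mcnt Λ x : ℝ) / Λ.card) ^ 2 * Λ.card / (Mcnt Λ x : ℝ)
            else 0) := by
        intro x
        by_cases hx : 0 < Mcnt Λ x
        · rw [if_pos hx, hfval x, if_pos hx]
        · simp [hx]
      rw [Finset.sum_congr rfl (fun x _ => this x), ← Finset.mul_sum,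
        master Λ i hm1 hi]
    rw [hsumA]
    have hAcR : (Afin.card : ℝ) ≠ 0 := by
      exact_mod_cast Nat.pos_iff_ne_zero.mp hAne
    field_simp
    exact hint
  show (∫ u, f u ∂(μ[|{u | 0 < (∑ j ∈ Λ, efronW n q j u) / (Λ.card:ℝ)}])) = c * (1 - 1/(Λ.card:ℝ))
  rw [hAset]
  exact hgoal
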